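/- With the setup of the diagonalized second fundamental form (orthonormal basis X₁,…,X_{2n} with α(X_i,X_j)=0 for i≠j, K_{ij} = c + ⟨α_i,α_j⟩, Kaehler identity for the Gauss curvature tensor): if K_{ij} ≠ 0 for some i ≠ j, then (i) span{X_i, X_j} is J-invariant (holomorphic); (ii) K_{ik} = K_{jk} = 0 for all k ∉ {i,j}; and (iii) ⟨α_i - α_j, α_k⟩ = 0 for all k ∉ {i,j}. -/

import Mathlib

open scoped RealInnerProductSpace

/-- The (4,0)-curvature tensor `⟨R(X,Y)Z,W⟩` determined by the Gauss equation in a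
space form of curvature `c`. -/
noncomputable def gaussR {V N : Type*} [NormedAddCommGroup V] [InnerProductSpace ℝ V]
    [NormedAddCommGroup N] [InnerProductSpace ℝ N]
    (c : ℝ) (α : V →ₗ[ℝ] V →ₗ[ℝ] N) (X Y Z W : V) : ℝ :=
  c * (⟪Y, Z⟫ * ⟪X, W⟫ - ⟪X, Z⟫ * ⟪Y, W⟫) + ⟪α X W, α Y Z⟫ - ⟪α X Z, α Y W⟫

/-- Lemma 8 of the paper, parts (i), (ii), (iii). -/
theorem stmt_9
    (V N : Type*) [NormedAddCommGroup V] [InnerProductSpace ℝ V] [FiniteDimensional ℝ V]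
    [NormedAddCommGroup N] [InnerProductSpace ℝ N]
    (n : ℕ) (c : ℝ)
    (J : V →ₗ[ℝ] V) (hJ2 : ∀ X : V, J (J X) = -X)
    (hJorth : ∀ X Y : V, ⟪J X, J Y⟫ = ⟪X, Y⟫)
    (α : V →ₗ[ℝ] V →ₗ[ℝ] N) (hαsymm : ∀ X Y : V, α X Y = α Y X)
    (hKaehler : ∀ X Y Z W : V, gaussR c α X Y (J Z) (J W) = gaussR c α X Y Z W)
    (b : Module.Basis (Fin (2 * n)) ℝ V) (hb : Orthonormal ℝ b)
    (hdiag : ∀ i j : Fin (2 * n), i ≠ j → α (b i) (b j) = 0)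
    (i j : Fin (2 * n)) (hij : i ≠ j)
    (hKij : c + ⟪α (b i) (b i), α (b j) (b j)⟫ ≠ 0) :
    (∀ v ∈ Submodule.span ℝ {b i, b j}, J v ∈ Submodule.span ℝ {b i, b j}) ∧
      (∀ k : Fin (2 * n), k ≠ i → k ≠ j →
        c + ⟪α (b i) (b i), α (b k) (b k)⟫ = 0 ∧
        c + ⟪α (b j) (b j), α (b k) (b k)⟫ = 0) ∧
      (∀ k : Fin (2 * n), k ≠ i → k ≠ j →
        ⟪α (b i) (b i) - α (b j) (b j), α (b k) (b k)⟫ = 0) := by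
  have hbij := orthonormal_iff_ite.mp hb
  -- the representation of any vector in an orthonormal basis
  have hrepr : ∀ (p : Fin (2 * n)) (v : V), b.repr v p = ⟪b p, v⟫ := by
    intro p v
    have h := hb.inner_right_fintype (l := fun s => b.repr v s) p
    rw [b.sum_repr v] at h
    exact h.symm
  -- since α is diagonalized by b, α (b p) v is a multiple of α (b p) (b p)
  have keyA : ∀ (p : Fin (2 * n)) (v : V), α (b p) v = ⟪b p, v⟫ • α (b p) (b p) := by
    intro p v
    conv_lhs => rw [← b.sum_repr v]
    rw [map_sum, Finset.sum_eq_single p]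
    · rw [map_smul, hrepr]
    · intro s _ hs
      rw [map_smul, hdiag p s (Ne.symm hs), smul_zero]
    · intro h; exact absurd (Finset.mem_univ p) h
  -- the curvature tensor on basis vectors
  have keyB : ∀ (p q : Fin (2 * n)) (Z W : V), gaussR c α (b p) (b q) Z W =
      (c + ⟪α (b p) (b p), α (b q) (b q)⟫) *
        (⟪b q, Z⟫ * ⟪b p, W⟫ - ⟪b p, Z⟫ * ⟪b q, W⟫) := by
    intro p q Z W
    unfold gaussR
    rw [keyA p W, keyA q Z, keyA p Z, keyA q W]
    simp only [real_inner_smul_left, real_inner_smul_right]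
    ring
  -- J is skew-adjoint
  have hskew : ∀ X Y : V, ⟪J X, Y⟫ = -⟪X, J Y⟫ := by
    intro X Y
    have h1 : ⟪J X, J (J Y)⟫ = ⟪X, J Y⟫ := hJorth X (J Y)
    rw [hJ2, inner_neg_right] at h1
    linarith
  have hJself : ∀ X : V, ⟪X, J X⟫ = 0 := by
    intro X
    have h1 := hskew X X
    have h2 : ⟪J X, X⟫ = ⟪X, J X⟫ := real_inner_comm _ _
    linarith
  -- the key consequence of the Kähler identity
  have keyC : ∀ (p q : Fin (2 * n)), p ≠ q →
      (c + ⟪α (b p) (b p), α (b q) (b q)⟫) * (⟪b p, J (b q)⟫ ^ 2 - 1) = 0 := by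
    intro p q hpq
    have h := hKaehler (b p) (b q) (b q) (b p)
    rw [keyB, keyB] at h
    have h1 : ⟪b q, J (b q)⟫ = 0 := hJself (b q)
    have h2 : ⟪b q, J (b p)⟫ = -⟪b p, J (b q)⟫ := by
      rw [real_inner_comm, hskew]
    have h3 : ⟪b q, b q⟫ = (1 : ℝ) := by simpa using hbij q q
    have h4 : ⟪b p, b p⟫ = (1 : ℝ) := by simpa using hbij p p
    have h5 : ⟪b p, b q⟫ = (0 : ℝ) := by simpa [hpq] using hbij p q
    have h6 : ⟪b q, b p⟫ = (0 : ℝ) := by simpa [Ne.symm hpq] using hbij q p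
    rw [h1, h2, h3, h4, h5, h6] at h
    nlinarith [h]
  -- abbreviation for the relevant inner product
  set ε : ℝ := ⟪b i, J (b j)⟫ with hε
  have hε2 : ε ^ 2 = 1 := by
    have h := keyC i j hij
    rcases mul_eq_zero.mp h with h' | h'
    · exact absurd h' hKij
    · linarith
  have hε0 : ε ≠ 0 := by
    intro h; rw [h] at hε2; norm_num at hε2
  -- J (b j) = ε • b i
  have hJbj : J (b j) = ε • b i := by
    have hnorm : ⟪J (b j) - ε • b i, J (b j) - ε • b i⟫ = 0 := by
      have e1 : ⟪J (b j), J (b j)⟫ = (1 : ℝ) := by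
        rw [hJorth]; simpa using hbij j j
      have e2 : ⟪J (b j), b i⟫ = ε := by rw [real_inner_comm]
      have e3 : ⟪b i, J (b j)⟫ = ε := rfl
      have e4 : ⟪b i, b i⟫ = (1 : ℝ) := by simpa using hbij i i
      rw [inner_sub_left, inner_sub_right, inner_sub_right, real_inner_smul_left,
        real_inner_smul_left, real_inner_smul_right, real_inner_smul_right,
        e1, e2, e3, e4]
      nlinarith [hε2]
    have := inner_self_eq_zero.mp hnorm
    rw [sub_eq_zero] at this
    exact this
  -- J (b i) = -ε • b j
  have hJbi : J (b i) = (-ε) • b j := by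
    have h := congrArg J hJbj
    rw [hJ2, map_smul] at h
    have h2 : ε • J (b i) = ε • ((-ε) • b j) := by
      rw [smul_smul]
      have : ε * -ε = -(ε ^ 2) := by ring
      rw [this, hε2, ← h, neg_smul, one_smul]
    exact smul_right_injective V hε0 h2
  have hpart2 : ∀ k : Fin (2 * n), k ≠ i → k ≠ j →
      c + ⟪α (b i) (b i), α (b k) (b k)⟫ = 0 ∧
      c + ⟪α (b j) (b j), α (b k) (b k)⟫ = 0 := by
    intro k hki hkj
    have hik : ⟪b i, J (b k)⟫ = 0 := by
      rw [real_inner_comm, hskew, hJbi, real_inner_smul_right]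
      have : ⟪b k, b j⟫ = (0 : ℝ) := by simpa [hkj] using hbij k j
      rw [this]; ring
    have hjk : ⟪b j, J (b k)⟫ = 0 := by
      rw [real_inner_comm, hskew, hJbj, real_inner_smul_right]
      have : ⟪b k, b i⟫ = (0 : ℝ) := by simpa [hki] using hbij k i
      rw [this]; ring
    constructor
    · have h := keyC i k (Ne.symm hki)
      rw [hik] at h
      nlinarith [h]
    · have h := keyC j k (Ne.symm hkj)
      rw [hjk] at h
      nlinarith [h]
  refine ⟨?_, hpart2, ?_⟩
  · -- part (i): J-invariance of the span
    intro v hv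
    induction hv using Submodule.span_induction with
    | mem x hx =>
      rcases hx with hx | hx
      · rw [hx, hJbi]
        exact Submodule.smul_mem _ _ (Submodule.subset_span (Or.inr rfl))
      · rw [Set.mem_singleton_iff.mp hx, hJbj]
        exact Submodule.smul_mem _ _ (Submodule.subset_span (Or.inl rfl))
    | zero => simp only [map_zero]; exact Submodule.zero_mem _
    | add x y _ _ hx hy => rw [map_add]; exact Submodule.add_mem _ hx hy
    | smul t x _ hx => rw [map_smul]; exact Submodule.smul_mem _ _ hx
  · -- part (iii)
    intro k hki hkj
    obtain ⟨h1, h2⟩ := hpart2 k hki hkj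
    rw [inner_sub_left]
    linarith
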